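/- Let p = 1.409, q = 1/p. There is no configuration consisting of one point Y with p ≤ |Y| ≤ 1.59 and nine points X₁, …, X₉ with 1 ≤ |Xᵢ| ≤ 1.2931, such that dist(Xᵢ, Xⱼ) ≥ q for all i ≠ j and dist(Y, Xᵢ) ≥ p for all i. -/

import Mathlib

lemma myCos55 : (0.8504 : ℝ) ≤ Real.cos 0.55 := by
  have h2 : Real.cos (0.55 : ℝ) = 2 * Real.cos 0.275 ^ 2 - 1 := by
    rw [show (0.55 : ℝ) = 2 * 0.275 by norm_num, Real.cos_two_mul]
  have hb := Real.cos_bound (x := 0.275) (by rw [abs_of_nonneg] <;> norm_num)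
  rw [abs_le, abs_of_nonneg (by norm_num : (0:ℝ) ≤ 0.275)] at hb
  have h1 : (0.96188 : ℝ) ≤ Real.cos 0.275 := by nlinarith [hb.1, hb.2]
  nlinarith [h1]

lemma myCos96 : (0.54 : ℝ) ≤ Real.cos 0.96 := by
  have h2 : Real.cos (0.96 : ℝ) = 2 * Real.cos 0.48 ^ 2 - 1 := by
    rw [show (0.96 : ℝ) = 2 * 0.48 by norm_num, Real.cos_two_mul]
  have hb := Real.cos_bound (x := 0.48) (by rw [abs_of_nonneg] <;> norm_num)
  rw [abs_le, abs_of_nonneg (by norm_num : (0:ℝ) ≤ 0.48)] at hb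
  have h1 : (0.88203 : ℝ) ≤ Real.cos 0.48 := by nlinarith [hb.1, hb.2]
  nlinarith [h1]

lemma mySep {u A : ℝ} (hu1 : -(2*Real.pi) < u) (hu2 : u < 2*Real.pi)
    (hA0 : 0 < A) (hAp : A ≤ Real.pi) (hc : Real.cos u ≤ Real.cos A) :
    A ≤ |u| ∧ |u| ≤ 2*Real.pi - A := by
  have hu : |u| < 2 * Real.pi := abs_lt.2 ⟨hu1, hu2⟩
  have h0 : Real.cos |u| ≤ Real.cos A := by rwa [Real.cos_abs]
  rcases le_or_gt |u| Real.pi with h | h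
  · refine ⟨?_, by linarith⟩
    by_contra hlt
    push_neg at hlt
    have := Real.strictAntiOn_cos ⟨abs_nonneg u, h⟩ ⟨hA0.le, hAp⟩ hlt
    linarith
  · refine ⟨by linarith, ?_⟩
    have h0' : Real.cos (2*Real.pi - |u|) ≤ Real.cos A := by
      rw [show 2*Real.pi - |u| = -(|u| - 2*Real.pi) by ring, Real.cos_neg,
        Real.cos_sub_two_pi]
      exact h0
    by_contra hgt
    push_neg at hgt
    have := Real.strictAntiOn_cos ⟨by linarith, by linarith⟩ ⟨hA0.le, hAp⟩
      (by linarith : 2*Real.pi - |u| < A)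
    linarith

lemma myPairCos {z w : ℂ} (hz : z ≠ 0) (hw : w ≠ 0) {K d : ℝ} (hd0 : 0 ≤ d)
    (hd : d ≤ ‖z - w‖)
    (hK : ‖z‖ ^ 2 + ‖w‖ ^ 2 - d ^ 2
      ≤ 2 * (‖z‖ * ‖w‖) * K) :
    Real.cos (z.arg - w.arg) ≤ K := by
  have haz : 0 < ‖z‖ := norm_pos_iff.mpr hz
  have haw : 0 < ‖w‖ := norm_pos_iff.mpr hw
  have h1 : ‖z‖ ^ 2 = z.re ^ 2 + z.im ^ 2 := by
    rw [Complex.sq_norm, Complex.normSq_apply]; ring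
  have h2 : ‖w‖ ^ 2 = w.re ^ 2 + w.im ^ 2 := by
    rw [Complex.sq_norm, Complex.normSq_apply]; ring
  have h3 : d ^ 2 ≤ (z.re - w.re) ^ 2 + (z.im - w.im) ^ 2 := by
    have := pow_le_pow_left₀ hd0 hd 2
    rwa [Complex.sq_norm, Complex.normSq_apply, Complex.sub_re, Complex.sub_im,
      ← sq, ← sq] at this
  rw [Real.cos_sub, Complex.cos_arg hz, Complex.cos_arg hw, Complex.sin_arg,
    Complex.sin_arg]
  rw [div_mul_div_comm, div_mul_div_comm, ← add_div, div_le_iff₀ (by positivity)]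
  nlinarith [h1, h2, h3, hK]

lemma myAbsMk (v : EuclideanSpace ℝ (Fin 2)) : ‖(⟨v 0, v 1⟩ : ℂ)‖ = ‖v‖ := by
  rw [EuclideanSpace.norm_eq, Complex.norm_def, Complex.normSq_mk]
  simp [Fin.sum_univ_two, Real.norm_eq_abs, sq_abs, sq]

lemma myDistMk (v w : EuclideanSpace ℝ (Fin 2)) :
    ‖(⟨v 0, v 1⟩ - ⟨w 0, w 1⟩ : ℂ)‖ = dist v w := by
  rw [EuclideanSpace.dist_eq, Complex.norm_def, Complex.normSq_apply]
  simp [Complex.sub_re, Complex.sub_im, Fin.sum_univ_two, Real.dist_eq, sq_abs, sq]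

set_option maxHeartbeats 1000000 in
/-- Impossible: one point Y with p ≤ |Y| ≤ 1.59 and nine points Xᵢ with
1 ≤ |Xᵢ| ≤ 1.2931, pairwise X-distances ≥ q = 1/p and dist(Y, Xᵢ) ≥ p = 1.409. -/
theorem stmt_11 (Y : EuclideanSpace ℝ (Fin 2)) (X : Fin 9 → EuclideanSpace ℝ (Fin 2))
    (hY : (1.409 : ℝ) ≤ ‖Y‖ ∧ ‖Y‖ ≤ 1.59)
    (hX : ∀ i, (1 : ℝ) ≤ ‖X i‖ ∧ ‖X i‖ ≤ 1.2931)
    (hXX : ∀ i j, i ≠ j → (1 / 1.409 : ℝ) ≤ dist (X i) (X j))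
    (hYX : ∀ i, (1.409 : ℝ) ≤ dist Y (X i)) : False := by
  have hpi : (3.14 : ℝ) < Real.pi := by
    have := Real.pi_gt_d6; linarith
  have hpi' : Real.pi < 3.15 := Real.pi_lt_d2
  set P : Fin 10 → ℂ := fun i =>
    if h : (i : ℕ) < 9 then ⟨X ⟨i, h⟩ 0, X ⟨i, h⟩ 1⟩ else ⟨Y 0, Y 1⟩ with hP
  have hPX : ∀ (i : Fin 10) (h : (i : ℕ) < 9), P i = ⟨X ⟨i, h⟩ 0, X ⟨i, h⟩ 1⟩ :=
    fun i h => by simp only [hP, dif_pos h]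
  have hP9 : P 9 = ⟨Y 0, Y 1⟩ := by
    simp only [hP]; rw [dif_neg]; decide
  have hvlt : ∀ i : Fin 10, i ≠ 9 → (i : ℕ) < 9 := by
    intro i hi
    have h10 := i.isLt
    have : (i : ℕ) ≠ 9 := fun h => hi (Fin.ext h)
    omega
  have habsX : ∀ i : Fin 10, i ≠ 9 →
      1 ≤ ‖P i‖ ∧ ‖P i‖ ≤ 1.2931 := by
    intro i hi
    rw [hPX i (hvlt i hi), myAbsMk]
    exact hX _
  have habsY : 1.409 ≤ ‖P 9‖ ∧ ‖P 9‖ ≤ 1.59 := by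
    rw [hP9, myAbsMk]; exact hY
  have hchX : ∀ i j : Fin 10, i ≠ j → i ≠ 9 → j ≠ 9 →
      (1 / 1.409 : ℝ) ≤ ‖P i - P j‖ := by
    intro i j hij hi hj
    rw [hPX i (hvlt i hi), hPX j (hvlt j hj), myDistMk]
    refine hXX _ _ fun h => hij ?_
    have : (i : ℕ) = (j : ℕ) := by
      have := congrArg Fin.val h; simpa using this
    exact Fin.ext this
  have hchY : ∀ i : Fin 10, i ≠ 9 → (1.409 : ℝ) ≤ ‖P 9 - P i‖ := by
    intro i hi
    rw [hP9, hPX i (hvlt i hi), myDistMk]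
    exact hYX _
  have hne0 : ∀ i : Fin 10, P i ≠ 0 := by
    intro i hzero
    by_cases hi : i = 9
    · subst hi; have := habsY.1; rw [hzero] at this; simp at this; linarith
    · have := (habsX i hi).1; rw [hzero] at this; simp at this; linarith
  have hpair : ∀ i j : Fin 10, i ≠ j →
      Real.cos ((P i).arg - (P j).arg) ≤ Real.cos 0.55 ∧
      ((i = 9 ∨ j = 9) → Real.cos ((P i).arg - (P j).arg) ≤ Real.cos 0.96) := by
    have key : ∀ j : Fin 10, j ≠ 9 → ∀ K : ℝ, (0.54 : ℝ) ≤ K →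
        ‖P 9‖ ^ 2 + ‖P j‖ ^ 2 - 1.409 ^ 2
          ≤ 2 * (‖P 9‖ * ‖P j‖) * K := by
      intro j hj K hK
      obtain ⟨ha1, ha2⟩ := habsY
      obtain ⟨hb1, hb2⟩ := habsX j hj
      set a := ‖P 9‖
      set b := ‖P j‖
      have hab : (0:ℝ) ≤ 2*(a*b) := by nlinarith
      calc a^2 + b^2 - 1.409^2 ≤ 2*(a*b)*0.54 := by
            nlinarith [mul_nonneg (by linarith : (0:ℝ) ≤ a-1.409) (by linarith : (0:ℝ) ≤ 1.2931-b),
              mul_nonneg (by linarith : (0:ℝ) ≤ 1.59-a) (by linarith : (0:ℝ) ≤ b-1),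
              mul_nonneg (by linarith : (0:ℝ) ≤ a-1.409) (by linarith : (0:ℝ) ≤ b-1),
              mul_nonneg (by linarith : (0:ℝ) ≤ 1.59-a) (by linarith : (0:ℝ) ≤ 1.2931-b)]
        _ ≤ 2*(a*b)*K := by nlinarith [hK, hab]
    intro i j hij
    by_cases hi : i = 9
    · subst hi
      have hj : j ≠ 9 := fun h => hij h.symm
      have hd := hchY j hj
      exact ⟨myPairCos (hne0 _) (hne0 _) (by norm_num) hd
          (key j hj _ (by linarith [myCos55])),
        fun _ => myPairCos (hne0 _) (hne0 _) (by norm_num) hd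
          (key j hj _ myCos96)⟩
    · by_cases hj : j = 9
      · subst hj
        have hd : (1.409:ℝ) ≤ ‖P i - P 9‖ := by
          rw [norm_sub_rev]; exact hchY i hi
        have key' : ∀ K : ℝ, (0.54 : ℝ) ≤ K →
            ‖P i‖ ^ 2 + ‖P 9‖ ^ 2 - 1.409 ^ 2
              ≤ 2 * (‖P i‖ * ‖P 9‖) * K := by
          intro K hK
          have := key i hi K hK
          calc ‖P i‖ ^ 2 + ‖P 9‖ ^ 2 - 1.409 ^ 2
              = ‖P 9‖ ^ 2 + ‖P i‖ ^ 2 - 1.409 ^ 2 := by ring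
            _ ≤ 2 * (‖P 9‖ * ‖P i‖) * K := this
            _ = 2 * (‖P i‖ * ‖P 9‖) * K := by ring
        exact ⟨myPairCos (hne0 _) (hne0 _) (by norm_num) hd
            (key' _ (by linarith [myCos55])),
          fun _ => myPairCos (hne0 _) (hne0 _) (by norm_num) hd (key' _ myCos96)⟩
      · obtain ⟨ha1, ha2⟩ := habsX i hi
        obtain ⟨hb1, hb2⟩ := habsX j hj
        have hd := hchX i j hij hi hj
        refine ⟨?_, fun h => by tauto⟩
        apply myPairCos (hne0 _) (hne0 _) (by norm_num) hd
        set a := ‖P i‖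
        set b := ‖P j‖
        have hab : (0:ℝ) ≤ 2*(a*b) := by nlinarith
        calc a^2 + b^2 - (1/1.409)^2 ≤ 2*(a*b)*0.8504 := by
              nlinarith [mul_nonneg (by linarith : (0:ℝ) ≤ a-1) (by linarith : (0:ℝ) ≤ 1.2931-b),
                mul_nonneg (by linarith : (0:ℝ) ≤ 1.2931-a) (by linarith : (0:ℝ) ≤ b-1),
                mul_nonneg (by linarith : (0:ℝ) ≤ a-1) (by linarith : (0:ℝ) ≤ b-1),
                mul_nonneg (by linarith : (0:ℝ) ≤ 1.2931-a) (by linarith : (0:ℝ) ≤ 1.2931-b)]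
          _ ≤ 2*(a*b)*Real.cos 0.55 := by nlinarith [myCos55, hab]
  -- sorted angles
  set α : Fin 10 → ℝ := fun i => (P i).arg with hα
  obtain ⟨σ, hmono'⟩ : ∃ σ : Equiv.Perm (Fin 10), Monotone (α ∘ ⇑σ) :=
    ⟨Tuple.sort α, Tuple.monotone_sort α⟩
  set t : Fin 10 → ℝ := α ∘ ⇑σ with ht
  have hmono : Monotone t := hmono'

  have htlo : ∀ k, -Real.pi < t k := fun k => Complex.neg_pi_lt_arg _
  have hthi : ∀ k, t k ≤ Real.pi := fun k => Complex.arg_le_pi _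
  clear_value t
  set G : Fin 10 → ℝ := fun k => t (k + 1) - t k + (if k = 9 then 2 * Real.pi else 0)
    with hG
  have h90 : ((9:Fin 10) + 1) = 0 := by decide
  have hGdef : ∀ k : Fin 10, k ≠ 9 → G k = t (k + 1) - t k := by
    intro k hk
    simp [hG, hk]
  have hg9 : G 9 = t 0 - t 9 + 2 * Real.pi := by
    simp [hG, h90]
  have hsum : ∑ k : Fin 10, G k = 2 * Real.pi := by
    have h1 : ∑ k : Fin 10, t (k + 1) = ∑ k : Fin 10, t k :=
      Fintype.sum_equiv (Equiv.addRight 1) _ _ (fun k => rfl)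
    simp only [hG]
    rw [Finset.sum_add_distrib, Finset.sum_sub_distrib, h1]
    rw [Finset.sum_ite_eq' Finset.univ (9 : Fin 10) (fun _ => 2 * Real.pi)]
    simp
  clear_value G
  have hsucc_ne : ∀ k : Fin 10, k + 1 ≠ k := by decide
  have hgap : ∀ (k : Fin 10) (A : ℝ), 0 < A → A ≤ Real.pi →
      Real.cos (t (k + 1) - t k) ≤ Real.cos A → A ≤ G k := by
    intro k A hA0 hAp hc
    have hu1 : -(2*Real.pi) < t (k+1) - t k := by
      have := htlo (k+1); have := hthi k; linarith
    have hu2 : t (k+1) - t k < 2*Real.pi := by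
      have := hthi (k+1); have := htlo k; linarith
    obtain ⟨hs1, hs2⟩ := mySep hu1 hu2 hA0 hAp hc
    by_cases hk : k = 9
    · subst hk
      have hle : t 0 ≤ t 9 := hmono (by decide : (0:Fin 10) ≤ 9)
      rw [h90] at hs2
      rw [abs_of_nonpos (by linarith)] at hs2
      rw [hg9]
      linarith
    · have hkv : (k : ℕ) < 9 := hvlt k hk
      have hlt : k < k + 1 := by
        rw [Fin.lt_def, Fin.add_def]
        simp only [Fin.val_one]
        omega
      have hle : t k ≤ t (k+1) := hmono hlt.le
      rw [abs_of_nonneg (by linarith)] at hs1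
      rw [hGdef k hk]
      linarith
  have harg : ∀ k : Fin 10, t (k+1) - t k = (P (σ (k+1))).arg - (P (σ k)).arg := by
    intro k; simp [ht, hα]
  have hne_img : ∀ k : Fin 10, σ (k+1) ≠ σ k :=
    fun k => (Equiv.injective σ).ne (hsucc_ne k)
  have hG1 : ∀ k : Fin 10, (0.55 : ℝ) ≤ G k := by
    intro k
    apply hgap k 0.55 (by norm_num) (by linarith)
    rw [harg k]
    exact (hpair _ _ (hne_img k)).1
  have hGp : ∀ k : Fin 10, (σ (k+1) = 9 ∨ σ k = 9) → (0.96 : ℝ) ≤ G k := by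
    intro k hk
    apply hgap k 0.96 (by norm_num) (by linarith)
    rw [harg k]
    exact (hpair _ _ (hne_img k)).2 hk
  set m : Fin 10 := σ⁻¹ 9 with hm
  have hσm : σ m = 9 := σ.apply_symm_apply 9
  have hm1 : (m - 1) + 1 = m := sub_add_cancel m 1
  have hGm : (0.96 : ℝ) ≤ G m := hGp m (Or.inr hσm)
  have hGm' : (0.96 : ℝ) ≤ G (m - 1) := hGp (m-1) (Or.inl (by rw [hm1]; exact hσm))
  have hmne : m - 1 ≠ m := by
    intro h
    have : (1 : Fin 10) = 0 := by
      have := sub_eq_self.mp h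
      exact this
    exact absurd this (by decide)
  -- final sum bound
  set s : Finset (Fin 10) := {m - 1, m} with hs
  have hcard : s.card = 2 := Finset.card_pair hmne
  have hsplit : ∑ k ∈ s, G k + ∑ k ∈ sᶜ, G k = ∑ k : Fin 10, G k :=
    Finset.sum_add_sum_compl s G
  have h1 : ∑ k ∈ s, G k = G (m-1) + G m := Finset.sum_pair hmne
  have h2 : (4.4 : ℝ) ≤ ∑ k ∈ sᶜ, G k := by
    have hb := Finset.card_nsmul_le_sum sᶜ G 0.55 (fun x _ => hG1 x)
    have hc : sᶜ.card = 8 := by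
      rw [Finset.card_compl, hcard]
      simp
    rw [hc, nsmul_eq_mul] at hb
    norm_num at hb
    linarith
  linarith [hsum, hsplit, h1, h2, hGm, hGm']
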